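/- Every state in {0,1}^n ⊆ F_q^n equal to its own support is mapped by a monomial system f to the same value as its Booleanization T(f) maps it (under the identification {0,1} with F_2); consequently the phase space of T(f) embeds as a subgraph of the phase space of f. -/

import Mathlib

/-- The monomial dynamical system with exponent matrix `A`. -/
def monomialMap {K : Type*} [CommRing K] {n : ℕ} (A : Matrix (Fin n) (Fin n) ℕ)
    (x : Fin n → K) : Fin n → K := fun i => ∏ j, x j ^ A i j

/-- The exponent matrix of the Booleanization `T(f)`. -/
def boolMat {n : ℕ} (A : Matrix (Fin n) (Fin n) ℕ) : Matrix (Fin n) (Fin n) ℕ :=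
  fun i j => if 0 < A i j then 1 else 0

/-- The identification of `F_2` with the subset `{0,1}` of `F`. -/
def emb (F : Type*) [Field F] [DecidableEq F] : ZMod 2 → F :=
  fun a => if a = 0 then 0 else 1

lemma zmod2_cases : ∀ a : ZMod 2, a = 0 ∨ a = 1 := by decide

lemma emb_mul {F : Type*} [Field F] [DecidableEq F] (a b : ZMod 2) :
    emb F (a * b) = emb F a * emb F b := by
  rcases zmod2_cases a with h | h <;> rcases zmod2_cases b with h' | h' <;>
    simp [h, h', emb]

theorem stmt3 {F : Type*} [Field F] [Fintype F] [DecidableEq F] {n : ℕ}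
    (A : Matrix (Fin n) (Fin n) ℕ) :
    (∀ v : Fin n → ZMod 2,
      monomialMap A (fun i => emb F (v i)) =
        fun i => emb F (monomialMap (K := ZMod 2) (boolMat A) v i)) ∧
    Function.Injective (fun (v : Fin n → ZMod 2) => fun i => emb F (v i)) := by
  constructor
  · intro v
    funext i
    simp only [monomialMap]
    rw [show (emb F (∏ j, v j ^ boolMat A i j)) = ∏ j, emb F (v j ^ boolMat A i j) by
      induction (Finset.univ : Finset (Fin n)) using Finset.induction with
      | empty => simp [emb]
      | insert _ _ h ih => rw [Finset.prod_insert h, Finset.prod_insert h, ← ih, emb_mul]]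
    apply Finset.prod_congr rfl
    intro j _
    rcases Nat.eq_zero_or_pos (A i j) with h | h
    · simp [h, boolMat, emb]
    · have hne : A i j ≠ 0 := Nat.pos_iff_ne_zero.mp h
      rcases zmod2_cases (v j) with hv | hv
      · simp [hv, boolMat, h, emb, zero_pow hne]
      · simp [hv, boolMat, h, emb]
  · intro v w h
    funext i
    have := congrFun h i
    simp only [emb] at this
    rcases zmod2_cases (v i) with h1 | h1 <;> rcases zmod2_cases (w i) with h2 | h2 <;>
      simp [h1, h2] at this ⊢
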